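/- (Discrete vorticity preservation on Cartesian grids) For the semi-discrete scheme d/dt u_{ij} = -(1/(2Δx)) ( (p*_{i+½,j+½} - p*_{i-½,j+½}) + (p*_{i+½,j-½} - p*_{i-½,j-½}) ), d/dt v_{ij} = -(1/(2Δy)) ( (p*_{i+½,j+½} - p*_{i+½,j-½}) + (p*_{i-½,j+½} - p*_{i-½,j-½}) ), for ANY node values p*, the discrete vorticity ω_{i+½,j+½} := (u_{i,j+1} + u_{i+1,j+1} - u_{ij} - u_{i+1,j})/(2Δy) - (v_{i+1,j} + v_{i+1,j+1} - v_{ij} - v_{i,j+1})/(2Δx) satisfies d/dt ω_{i+½,j+½} = 0 at every node. -/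

import Mathlib

/-- Discrete vorticity preservation on Cartesian grids: for the semi-discrete
scheme
`d/dt u_{ij} = -(1/(2Δx)) ((p*_{i+½,j+½} - p*_{i-½,j+½}) + (p*_{i+½,j-½} - p*_{i-½,j-½}))`,
`d/dt v_{ij} = -(1/(2Δy)) ((p*_{i+½,j+½} - p*_{i+½,j-½}) + (p*_{i-½,j+½} - p*_{i-½,j-½}))`
(node `(i+½, j+½)` being indexed by `(i, j)`), for ANY node values `p*`, the
discrete vorticity
`ω_{i+½,j+½} = (u_{i,j+1} + u_{i+1,j+1} - u_{ij} - u_{i+1,j})/(2Δy)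
  - (v_{i+1,j} + v_{i+1,j+1} - v_{ij} - v_{i,j+1})/(2Δx)`
has vanishing time derivative at every node. -/
theorem discrete_vorticity_preserved
    (Δx Δy : ℝ) (hΔx : 0 < Δx) (hΔy : 0 < Δy)
    (u v : ℝ → ℤ → ℤ → ℝ) (P : ℝ → ℤ → ℤ → ℝ)
    (hu : ∀ t i j, HasDerivAt (fun τ => u τ i j)
      (-(1 / (2 * Δx)) * ((P t i j - P t (i - 1) j) + (P t i (j - 1) - P t (i - 1) (j - 1)))) t)
    (hv : ∀ t i j, HasDerivAt (fun τ => v τ i j)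
      (-(1 / (2 * Δy)) * ((P t i j - P t i (j - 1)) + (P t (i - 1) j - P t (i - 1) (j - 1)))) t) :
    ∀ t i j, HasDerivAt (fun τ =>
      (u τ i (j + 1) + u τ (i + 1) (j + 1) - u τ i j - u τ (i + 1) j) / (2 * Δy)
        - (v τ (i + 1) j + v τ (i + 1) (j + 1) - v τ i j - v τ i (j + 1)) / (2 * Δx))
      0 t := by
  intro t i j
  have h := ((((((hu t i (j+1)).add (hu t (i+1) (j+1))).sub (hu t i j)).sub
      (hu t (i+1) j)).div_const (2*Δy)).sub
    (((((hv t (i+1) j).add (hv t (i+1) (j+1))).sub (hv t i j)).sub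
      (hv t i (j+1))).div_const (2*Δx)))
  refine h.congr_deriv ?_
  simp only [add_sub_cancel_right]
  field_simp
  ring
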